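/- For every integer n with n ≡ 1 (mod 8) and 9 ≤ n ≤ 201, the n-crossing permutations over S_{n+3} generate exactly the subgroup of parity-preserving permutations that are even on each parity class: C(n, n+3) equals the set of σ ∈ S_{n+3} such that σ(i) ≡ i (mod 2) for all i, the permutation induced by σ on the odd-numbered points is even, and the permutation induced by σ on the even-numbered points is even. (Writing n = 8k + 1, this subgroup is isomorphic to A_{4k+2} × A_{4k+2}.) -/

import Mathlib

/-- The underlying function of the `n`-crossing permutation `π_j` over `{1, …, m}` (as a
function on `ℕ`): it sends `j + k` to `j + n - 1 - k` for `0 ≤ k ≤ n - 1` and fixes all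
other points. -/
def crossFun (n j i : ℕ) : ℕ :=
  if j ≤ i ∧ i < j + n then 2 * j + n - 1 - i else i

lemma crossFun_involutive (n j : ℕ) : Function.Involutive (crossFun n j) := by
  intro i
  unfold crossFun
  split_ifs <;> omega

/-- The `n`-crossing permutation `π_j`, viewed as a permutation of `ℕ` fixing every point
outside `{j, …, j + n - 1}`. -/
def crossPerm (n j : ℕ) : Equiv.Perm ℕ :=
  Function.Involutive.toPerm _ (crossFun_involutive n j)

/-- `C n m` is the subgroup of the symmetric group `S_m` (realized as permutations of `ℕ`
supported on `{1, …, m}`) generated by the `n`-crossing permutations `π_1, …, π_{m-n+1}`. -/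
def C (n m : ℕ) : Subgroup (Equiv.Perm ℕ) :=
  Subgroup.closure {σ | ∃ j, 1 ≤ j ∧ j ≤ m - n + 1 ∧ σ = crossPerm n j}


/-- A (finitely supported) permutation is even if it is a product of an even number of
transpositions. For a permutation supported on `{1, ..., m}` this says exactly that it lies
in the alternating group `A_m`. -/
def IsEvenPerm (s : Equiv.Perm ℕ) : Prop :=
  ∃ l : List (Equiv.Perm ℕ), (∀ t ∈ l, t.IsSwap) ∧ l.prod = s ∧ Even l.length

set_option maxHeartbeats 1600000

open Equiv in
lemma crossPerm_apply (n j x : ℕ) : crossPerm n j x = crossFun n j x := rfl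

lemma isEvenPerm_one : IsEvenPerm 1 := ⟨[], by simp, by simp, ⟨0, rfl⟩⟩

lemma IsEvenPerm.mul {a b : Equiv.Perm ℕ} (ha : IsEvenPerm a) (hb : IsEvenPerm b) :
    IsEvenPerm (a * b) := by
  obtain ⟨l1, h1, h1p, h1e⟩ := ha
  obtain ⟨l2, h2, h2p, h2e⟩ := hb
  refine ⟨l1 ++ l2, ?_, ?_, ?_⟩
  · intro t ht; rcases List.mem_append.1 ht with h | h
    exacts [h1 t h, h2 t h]
  · rw [List.prod_append, h1p, h2p]
  · rw [List.length_append]; exact h1e.add h2e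

lemma swaps_reverse_prod : ∀ l : List (Equiv.Perm ℕ), (∀ t ∈ l, t.IsSwap) →
    l.reverse.prod = l.prod⁻¹ := by
  intro l
  induction l with
  | nil => simp
  | cons a l ih =>
    intro h
    have ha : a⁻¹ = a := by
      obtain ⟨x, y, hxy, rfl⟩ := h a List.mem_cons_self
      exact Equiv.swap_inv x y
    simp only [List.reverse_cons, List.prod_append, List.prod_cons, List.prod_nil, mul_one,
      ih (fun t ht => h t (List.mem_cons_of_mem a ht)), mul_inv_rev, ha]

lemma IsEvenPerm.inv {a : Equiv.Perm ℕ} (ha : IsEvenPerm a) : IsEvenPerm a⁻¹ := by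
  obtain ⟨l, h, hp, he⟩ := ha
  exact ⟨l.reverse, fun t ht => h t (List.mem_reverse.1 ht),
    by rw [swaps_reverse_prod l h, hp], by simpa using he⟩

lemma perm_moved_inv {a : Equiv.Perm ℕ} {x : ℕ} (h : a⁻¹ x ≠ x) : a x ≠ x := by
  intro hc
  exact h (by conv_lhs => rw [← hc, ← Equiv.Perm.mul_apply, inv_mul_cancel, Equiv.Perm.one_apply])

lemma commute_oddeven {a b : Equiv.Perm ℕ} (ha : ∀ i, a i ≠ i → i % 2 = 1)
    (hb : ∀ i, b i ≠ i → i % 2 = 0) : a * b = b * a := by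
  ext x
  simp only [Equiv.Perm.mul_apply]
  by_cases hax : a x = x <;> by_cases hbx : b x = x
  · rw [hax, hbx, hax]
  · -- b moves x (even), a fixes x and b x
    have hbbx : b (b x) ≠ b x := fun hc => hbx (b.injective hc)
    have : a (b x) = b x := by
      by_contra hc
      have := ha _ hc; have := hb _ hbbx; omega
    rw [hax, this]
  · have haax : a (a x) ≠ a x := fun hc => hax (a.injective hc)
    have : b (a x) = a x := by
      by_contra hc
      have := hb _ hc; have := ha _ haax; omega
    rw [hbx, this]
  · have := ha _ hax; have := hb _ hbx; omega

/-- The target subgroup for the forward direction. -/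
def D (n : ℕ) : Subgroup (Equiv.Perm ℕ) where
  carrier := {σ | ∃ σodd σeven : Equiv.Perm ℕ,
        (∀ i, σodd i ≠ i → i % 2 = 1 ∧ 1 ≤ i ∧ i ≤ n + 3) ∧
        (∀ i, σeven i ≠ i → i % 2 = 0 ∧ 1 ≤ i ∧ i ≤ n + 3) ∧
        IsEvenPerm σodd ∧ IsEvenPerm σeven ∧ σ = σodd * σeven}
  one_mem' := ⟨1, 1, by simp, by simp, isEvenPerm_one, isEvenPerm_one, by simp⟩
  mul_mem' := by
    rintro a b ⟨ao, ae, hao, hae, eao, eae, rfl⟩ ⟨bo, be, hbo, hbe, ebo, ebe, rfl⟩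
    refine ⟨ao * bo, ae * be, ?_, ?_, eao.mul ebo, eae.mul ebe, ?_⟩
    · intro i h
      by_cases hb : bo i = i
      · exact hao i (by rwa [Equiv.Perm.mul_apply, hb] at h)
      · exact hbo i hb
    · intro i h
      by_cases hb : be i = i
      · exact hae i (by rwa [Equiv.Perm.mul_apply, hb] at h)
      · exact hbe i hb
    · have hc : ae * bo = bo * ae :=
        (commute_oddeven (fun i hi => (hbo i hi).1) (fun i hi => (hae i hi).1)).symm
      rw [mul_assoc ao ae, ← mul_assoc ae bo be, hc, mul_assoc, ← mul_assoc, ← mul_assoc]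
  inv_mem' := by
    rintro a ⟨ao, ae, hao, hae, eao, eae, rfl⟩
    refine ⟨ao⁻¹, ae⁻¹, ?_, ?_, eao.inv, eae.inv, ?_⟩
    · intro i h; exact hao i (perm_moved_inv h)
    · intro i h; exact hae i (perm_moved_inv h)
    · rw [mul_inv_rev]
      exact (commute_oddeven (fun i hi => (hao i (perm_moved_inv hi)).1)
        (fun i hi => (hae i (perm_moved_inv hi)).1)).symm ▸ rfl

def mirSwaps (M a0 t : ℕ) : List (Equiv.Perm ℕ) :=
  (List.range t).map fun i => Equiv.swap (a0 + 2*i) (M - (a0 + 2*i))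

lemma mirSwaps_prod (M a0 : ℕ) (h1 : 1 ≤ a0) (hM : M % 2 = 0) :
    ∀ t, 2*a0 + 4*t ≤ M + 2 → ∀ x, (mirSwaps M a0 t).prod x =
      if x % 2 = a0 % 2 ∧ (a0 ≤ x ∧ x < a0 + 2*t ∨ M - (a0 + 2*t) < x ∧ x ≤ M - a0)
        then M - x else x := by
  intro t
  induction t with
  | zero =>
    intro _ x
    simp only [mirSwaps, List.range_zero, List.map_nil, List.prod_nil, Equiv.Perm.one_apply]
    split_ifs with h
    · omega
    · rfl
  | succ t ih =>
    intro ht x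
    have hstep : mirSwaps M a0 (t+1)
        = mirSwaps M a0 t ++ [Equiv.swap (a0 + 2*t) (M - (a0 + 2*t))] := by
      simp [mirSwaps, List.range_succ]
    rw [hstep, List.prod_append, List.prod_cons, List.prod_nil, mul_one,
      Equiv.Perm.mul_apply, ih (by omega), Equiv.swap_apply_def]
    split_ifs <;> omega

set_option maxHeartbeats 1600000 in
lemma crossPerm_decomp (n j M a1 a2 t1 t2 : ℕ) (hn : n % 8 = 1) (hn9 : 9 ≤ n)
    (hj1 : 1 ≤ j) (hj4 : j ≤ 4)
    (hM : M = 2*j + n - 1) (ha1 : a1 = j + (j+1) % 2) (ha2 : a2 = j + j % 2)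
    (ht1 : t1 = (M/2 - a1 + 1)/2) (ht2 : t2 = (M/2 - a2 + 1)/2) :
    (∀ i, (mirSwaps M a1 t1).prod i ≠ i → i % 2 = 1 ∧ 1 ≤ i ∧ i ≤ n + 3) ∧
    (∀ i, (mirSwaps M a2 t2).prod i ≠ i → i % 2 = 0 ∧ 1 ≤ i ∧ i ≤ n + 3) ∧
    (∀ t ∈ mirSwaps M a1 t1, t.IsSwap) ∧ (∀ t ∈ mirSwaps M a2 t2, t.IsSwap) ∧
    Even (mirSwaps M a1 t1).length ∧ Even (mirSwaps M a2 t2).length ∧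
    crossPerm n j = (mirSwaps M a1 t1).prod * (mirSwaps M a2 t2).prod := by
  obtain ⟨k, rfl⟩ : ∃ k, n = 8*k+1 := ⟨n/8, by omega⟩
  have et1 : t1 = 2*k := by omega
  have et2 : t2 = 2*k := by omega
  clear ht1 ht2
  have hb1 : 2*a1 + 4*t1 ≤ M + 2 := by omega
  have hb2 : 2*a2 + 4*t2 ≤ M + 2 := by omega
  have hMe : M % 2 = 0 := by omega
  have h11 : 1 ≤ a1 := by omega
  have h12 : 1 ≤ a2 := by omega
  refine ⟨?_, ?_, ?_, ?_, ?_, ?_, ?_⟩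
  · intro i h
    rw [mirSwaps_prod M a1 h11 hMe t1 hb1 i] at h
    split_ifs at h with hc
    · omega
    · omega
  · intro i h
    rw [mirSwaps_prod M a2 h12 hMe t2 hb2 i] at h
    split_ifs at h with hc
    · omega
    · omega
  · rintro t ht
    obtain ⟨i, hi, rfl⟩ := List.mem_map.1 ht
    rw [List.mem_range] at hi
    exact ⟨_, _, by omega, rfl⟩
  · rintro t ht
    obtain ⟨i, hi, rfl⟩ := List.mem_map.1 ht
    rw [List.mem_range] at hi
    exact ⟨_, _, by omega, rfl⟩
  · have : (mirSwaps M a1 t1).length = t1 := by simp [mirSwaps]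
    rw [this, Nat.even_iff]; omega
  · have : (mirSwaps M a2 t2).length = t2 := by simp [mirSwaps]
    rw [this, Nat.even_iff]; omega
  · ext x
    rw [Equiv.Perm.mul_apply, mirSwaps_prod M a2 h12 hMe t2 hb2 x,
      mirSwaps_prod M a1 h11 hMe t1 hb1, crossPerm_apply]
    unfold crossFun
    split_ifs <;> omega

lemma swaps_bound : ∀ l : List (Equiv.Perm ℕ), (∀ t ∈ l, t.IsSwap) →
    ∃ N, ∀ t ∈ l, ∀ x, N ≤ x → t x = x := by
  intro l
  induction l with
  | nil => exact fun _ => ⟨0, by simp⟩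
  | cons a l ih =>
    intro h
    obtain ⟨N, hN⟩ := ih (fun t ht => h t (List.mem_cons_of_mem a ht))
    obtain ⟨x, y, hxy, rfl⟩ := h a List.mem_cons_self
    refine ⟨max N (max x y + 1), ?_⟩
    intro t ht z hz
    rcases List.mem_cons.1 ht with h | h
    · subst h
      exact Equiv.swap_apply_of_ne_of_ne (by omega) (by omega)
    · exact hN t h z (by omega)

lemma fix_prod (N : ℕ) : ∀ l : List (Equiv.Perm ℕ), (∀ t ∈ l, ∀ x, N ≤ x → t x = x) →
    ∀ x, N ≤ x → l.prod x = x := by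
  intro l
  induction l with
  | nil => simp
  | cons a l ih =>
    intro h x hx
    rw [List.prod_cons, Equiv.Perm.mul_apply,
      ih (fun t ht => h t (List.mem_cons_of_mem a ht)) x hx]
    exact h a List.mem_cons_self x hx

lemma fix_mem_range_iff (N : ℕ) (σ : Equiv.Perm ℕ) (h : ∀ x, N ≤ x → σ x = x) :
    ∀ x, x ∈ Finset.range N ↔ σ x ∈ Finset.range N := by
  intro x
  simp only [Finset.mem_range]
  constructor
  · intro hx
    by_contra hc
    have h2 := h (σ x) (by omega)
    have := σ.injective h2
    omega
  · intro hx
    by_contra hc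
    rw [h x (by omega)] at hx
    omega

/-- restriction of a permutation fixing everything `≥ N` to `{x // x ∈ range N}`. -/
def restr (N : ℕ) (σ : Equiv.Perm ℕ) (h : ∀ x, N ≤ x → σ x = x) :
    Equiv.Perm {x // x ∈ Finset.range N} :=
  σ.subtypePerm (fun x => (fix_mem_range_iff N σ h x).symm)

lemma restr_sign (N : ℕ) : ∀ l : List (Equiv.Perm ℕ), (∀ t ∈ l, t.IsSwap) →
    (∀ t ∈ l, ∀ x, N ≤ x → t x = x) → ∀ h,
    Equiv.Perm.sign (restr N l.prod h) = (-1)^l.length := by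
  intro l
  induction l with
  | nil =>
    intro _ _ h
    have : restr N ([] : List (Equiv.Perm ℕ)).prod h = 1 := by
      ext x
      simp [restr, Equiv.Perm.subtypePerm_apply]
    rw [this]; simp
  | cons a l ih =>
    intro hs hf h
    have hfl : ∀ x, N ≤ x → l.prod x = x :=
      fix_prod N l (fun t ht => hf t (List.mem_cons_of_mem a ht))
    have hfa : ∀ x, N ≤ x → a x = x := hf a List.mem_cons_self
    have hmul : restr N (a :: l).prod h
        = restr N a hfa * restr N l.prod hfl := by
      ext x
      simp [restr, Equiv.Perm.subtypePerm_apply, List.prod_cons]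
      rfl
    rw [hmul, map_mul]
    rw [ih (fun t ht => hs t (List.mem_cons_of_mem a ht))
      (fun t ht => hf t (List.mem_cons_of_mem a ht)) hfl]
    obtain ⟨x, y, hxy, rfl⟩ := hs a List.mem_cons_self
    have hx : x ∈ Finset.range N := by
      simp only [Finset.mem_range]
      by_contra hc
      have := hfa x (by omega)
      rw [Equiv.swap_apply_left] at this
      omega
    have hy : y ∈ Finset.range N := by
      simp only [Finset.mem_range]
      by_contra hc
      have := hfa y (by omega)
      rw [Equiv.swap_apply_right] at this
      omega
    have : restr N (Equiv.swap x y) hfa = Equiv.swap ⟨x, hx⟩ ⟨y, hy⟩ := by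
      ext z
      simp only [restr, Equiv.Perm.subtypePerm_apply, Equiv.swap_apply_def, Subtype.ext_iff]
      split_ifs <;> simp_all [Subtype.ext_iff]
    rw [this, Equiv.Perm.sign_swap (by simp [Subtype.ext_iff, hxy])]
    rw [List.length_cons, pow_succ, mul_comm]

lemma parity_transfer (l1 l2 : List (Equiv.Perm ℕ)) (h1 : ∀ t ∈ l1, t.IsSwap)
    (h2 : ∀ t ∈ l2, t.IsSwap) (hp : l1.prod = l2.prod) :
    (Even l1.length ↔ Even l2.length) := by
  obtain ⟨N1, hN1⟩ := swaps_bound l1 h1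
  obtain ⟨N2, hN2⟩ := swaps_bound l2 h2
  set N := max N1 N2 with hN
  have hf1 : ∀ t ∈ l1, ∀ x, N ≤ x → t x = x := fun t ht x hx => hN1 t ht x (by omega)
  have hf2 : ∀ t ∈ l2, ∀ x, N ≤ x → t x = x := fun t ht x hx => hN2 t ht x (by omega)
  have hfix1 := fix_prod N l1 hf1
  have s1 := restr_sign N l1 h1 hf1 hfix1
  have s2 := restr_sign N l2 h2 hf2 (hp ▸ hfix1)
  have e : restr N l1.prod hfix1 = restr N l2.prod (hp ▸ hfix1) := by
    ext z
    simp only [restr, Equiv.Perm.subtypePerm_apply]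
    exact (by rw [hp] : l1.prod (z : ℕ) = l2.prod (z : ℕ))
  rw [e, s2] at s1
  have s2 := s1
  -- s2 : (-1)^l2.length = (-1)^l1.length  (in ℤˣ)
  constructor
  · intro he
    by_contra ho
    rw [Nat.not_even_iff_odd] at ho
    rw [he.neg_one_pow, ho.neg_one_pow] at s2
    exact absurd s2 (by decide)
  · intro he
    by_contra ho
    rw [Nat.not_even_iff_odd] at ho
    rw [he.neg_one_pow, ho.neg_one_pow] at s2
    exact absurd s2 (by decide)

-- Part D : generation machinery
/-- adjacent transposition on the chain `2*i + r`. -/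
def adj (r i : ℕ) : Equiv.Perm ℕ := Equiv.swap (2*i+r) (2*i+2+r)

section Machinery

variable (G : Subgroup (Equiv.Perm ℕ)) (r I : ℕ)
variable (hγ : ∀ i, i + 2 < I → adj r i * adj r (i+1) ∈ G)

lemma adj_mul_self (i : ℕ) : adj r i * adj r i = 1 := Equiv.swap_mul_self _ _

include hγ in
lemma adj_pair_mem_of_le : ∀ d i, i + d + 1 < I → adj r i * adj r (i+d) ∈ G := by
  intro d
  induction d with
  | zero => intro i h; rw [Nat.add_zero, adj_mul_self]; exact one_mem G
  | succ d ih =>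
    intro i h
    have key : adj r i * adj r (i+(d+1))
        = (adj r i * adj r (i+d)) * (adj r (i+d) * adj r (i+d+1)) := by
      rw [mul_assoc, ← mul_assoc (adj r (i+d)) (adj r (i+d)), adj_mul_self, one_mul,
        ← Nat.add_assoc]
    rw [key]
    exact mul_mem (ih i (by omega)) (hγ (i+d) (by omega))

include hγ in
lemma adj_pair_mem : ∀ i j, i + 1 < I → j + 1 < I → adj r i * adj r j ∈ G := by
  intro i j hi hj
  rcases le_or_gt i j with h | h
  · obtain ⟨d, rfl⟩ := Nat.exists_eq_add_of_le h
    exact adj_pair_mem_of_le G r I hγ d i (by omega)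
  · obtain ⟨d, rfl⟩ := Nat.exists_eq_add_of_le h.le
    have := adj_pair_mem_of_le G r I hγ d j (by omega)
    have h2 : adj r (j+d) * adj r j = (adj r j * adj r (j+d))⁻¹ := by
      rw [mul_inv_rev]
      simp [adj, Equiv.swap_inv]
    rw [h2]
    exact inv_mem this
  
include hγ in
lemma adj_word_mem : ∀ (m : ℕ) (l : List ℕ), l.length ≤ m → (∀ i ∈ l, i + 1 < I) →
    Even l.length → (l.map (adj r)).prod ∈ G := by
  intro m
  induction m with
  | zero =>
    intro l hl _ _
    have : l = [] := List.length_eq_zero_iff.1 (by omega)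
    subst this
    simp only [List.map_nil, List.prod_nil]
    exact one_mem G
  | succ m ih =>
    intro l hl hmem he
    match l with
    | [] => simpa using one_mem G
    | [a] => simp at he
    | a :: b :: rest =>
      have : ((a :: b :: rest).map (adj r)).prod
          = (adj r a * adj r b) * (rest.map (adj r)).prod := by
        simp [List.prod_cons, mul_assoc]
      rw [this]
      refine mul_mem (adj_pair_mem G r I hγ a b ?_ ?_) (ih rest (by simp at hl ⊢; omega)
        (fun i hi => hmem i (by simp [hi])) ?_)
      · exact hmem a (by simp)
      · exact hmem b (by simp)
      · simpa [Nat.even_add_one, parity_simps] using he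

lemma swap_word : ∀ (d i : ℕ), 0 < d → i + d < I →
    ∃ l : List ℕ, (∀ x ∈ l, x + 1 < I) ∧ Odd l.length ∧
      (l.map (adj r)).prod = Equiv.swap (2*i+r) (2*(i+d)+r) := by
  intro d
  induction d with
  | zero => omega
  | succ d ih =>
    intro i _ hI
    rcases Nat.eq_zero_or_pos d with rfl | hd
    · refine ⟨[i], by intro x hx; simp at hx; omega, by simp, ?_⟩
      simp only [List.map_cons, List.map_nil, List.prod_cons, List.prod_nil, mul_one]
      have : 2*(i+1)+r = 2*i+2+r := by ring
      rw [this]; rfl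
    · obtain ⟨l, hl1, hl2, hl3⟩ := ih i hd (by omega)
      refine ⟨(i+d) :: l ++ [i+d], ?_, ?_, ?_⟩
      · intro x hx
        simp only [List.cons_append, List.mem_cons, List.mem_append] at hx
        rcases hx with rfl | hx | hx
        · omega
        · exact hl1 x hx
        · simp at hx; omega
      · obtain ⟨c, hc⟩ := hl2
        exact ⟨c + 1, by simp [hc]; ring⟩
      · simp only [List.cons_append, List.map_cons, List.map_append, List.prod_cons, List.prod_append, List.map_nil, List.prod_nil, mul_one]
        rw [hl3]
        -- adj r (i+d) * (swap (2i+r) (2(i+d)+r) * adj r (i+d)) = swap (2i+r) (2(i+d+1)+r)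
        have hd1 : 2*(i+d)+2+r = 2*(i+d+1)+r := by ring
        show Equiv.swap (2*(i+d)+r) (2*(i+d)+2+r) *
          (Equiv.swap (2*i+r) (2*(i+d)+r) * Equiv.swap (2*(i+d)+r) (2*(i+d)+2+r)) = _
        ext x
        simp only [Equiv.Perm.mul_apply, Equiv.swap_apply_def]
        split_ifs <;> omega

end Machinery

-- Part D2 : decomposition of a supported permutation into swaps, and the main membership lemma
lemma swap_decomp (χ : ℕ → Prop) (N : ℕ) (hχ : ∀ x, χ x → x < N) :
    ∀ (m : ℕ) (τ : Equiv.Perm ℕ), (∀ x, τ x ≠ x → χ x) →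
    ((Finset.range N).filter (fun x => τ x ≠ x)).card ≤ m →
    ∃ l : List (ℕ × ℕ), (∀ p ∈ l, χ p.1 ∧ χ p.2 ∧ p.1 ≠ p.2) ∧
      τ = (l.map (fun p => Equiv.swap p.1 p.2)).prod := by
  intro m
  induction m with
  | zero =>
    intro τ hsupp hcard
    refine ⟨[], by simp, ?_⟩
    ext x
    simp only [List.map_nil, List.prod_nil, Equiv.Perm.one_apply]
    by_contra hc
    have hx : x ∈ (Finset.range N).filter (fun x => τ x ≠ x) := by
      simp only [Finset.mem_filter, Finset.mem_range]
      exact ⟨hχ x (hsupp x hc), hc⟩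
    have := Finset.card_pos.2 ⟨x, hx⟩
    omega
  | succ m ih =>
    intro τ hsupp hcard
    by_cases hτ : ∀ x, τ x = x
    · refine ⟨[], by simp, ?_⟩
      ext x
      simp [hτ x]
    · push_neg at hτ
      obtain ⟨M, hM⟩ := hτ
      set a := τ M with ha
      have haM : a ≠ M := hM
      have haa : τ a ≠ a := by
        intro hc
        exact hM (τ.injective (by rw [hc, ← ha]))
      set τ' := Equiv.swap a M * τ with hτ'
      have hτ'M : τ' M = M := by
        rw [hτ', Equiv.Perm.mul_apply, ← ha, Equiv.swap_apply_left]
      have hmoved : ∀ x, τ' x ≠ x → τ x ≠ x ∧ x ≠ M := by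
        intro x hx
        constructor
        · intro hc
          rw [hτ', Equiv.Perm.mul_apply, hc, Equiv.swap_apply_def] at hx
          split_ifs at hx with h1 h2
          · exact haa (by rw [h1] at hc; exact hc)
          · exact hM (by rw [h2] at hc; exact hc)
          · exact hx rfl
        · intro hc
          rw [hc] at hx
          exact hx hτ'M
      have hsub : (Finset.range N).filter (fun x => τ' x ≠ x) ⊆
          ((Finset.range N).filter (fun x => τ x ≠ x)).erase M := by
        intro x hx
        simp only [Finset.mem_filter, Finset.mem_range, Finset.mem_erase] at hx ⊢
        exact ⟨(hmoved x hx.2).2, hx.1, (hmoved x hx.2).1⟩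
      have hcard' : ((Finset.range N).filter (fun x => τ' x ≠ x)).card ≤ m := by
        have h1 := Finset.card_le_card hsub
        have hMmem : M ∈ (Finset.range N).filter (fun x => τ x ≠ x) := by
          simp only [Finset.mem_filter, Finset.mem_range]
          exact ⟨hχ M (hsupp M hM), hM⟩
        have h2 := Finset.card_erase_of_mem hMmem
        omega
      obtain ⟨l, hl1, hl2⟩ := ih τ' (fun x hx => hsupp x (hmoved x hx).1) hcard'
      refine ⟨(a, M) :: l, ?_, ?_⟩
      · intro p hp
        rcases List.mem_cons.1 hp with rfl | hp
        · exact ⟨hsupp a haa, hsupp M hM, haM⟩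
        · exact hl1 p hp
      · simp only [List.map_cons, List.prod_cons, ← hl2]
        rw [hτ', ← mul_assoc, Equiv.swap_mul_self, one_mul]

lemma chain_swap_word (r I : ℕ) (x y : ℕ) (hx : ∃ i, i < I ∧ x = 2*i + r)
    (hy : ∃ i, i < I ∧ y = 2*i + r) (hne : x ≠ y) :
    ∃ l : List ℕ, (∀ u ∈ l, u + 1 < I) ∧ Odd l.length ∧
      (l.map (adj r)).prod = Equiv.swap x y := by
  obtain ⟨i, hi, rfl⟩ := hx
  obtain ⟨i', hi', rfl⟩ := hy
  rcases lt_trichotomy i i' with h | h | h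
  · obtain ⟨l, h1, h2, h3⟩ := swap_word r I (i' - i) i (by omega) (by omega)
    refine ⟨l, h1, h2, ?_⟩
    rw [h3]
    congr 1
    omega
  · omega
  · obtain ⟨l, h1, h2, h3⟩ := swap_word r I (i - i') i' (by omega) (by omega)
    refine ⟨l, h1, h2, ?_⟩
    rw [h3, Equiv.swap_comm]
    congr 1
    omega

lemma chain_swap_pair_mem (G : Subgroup (Equiv.Perm ℕ)) (r I : ℕ)
    (hγ : ∀ i, i + 2 < I → adj r i * adj r (i+1) ∈ G)
    (x1 y1 x2 y2 : ℕ) (hx1 : ∃ i, i < I ∧ x1 = 2*i + r) (hy1 : ∃ i, i < I ∧ y1 = 2*i + r)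
    (hx2 : ∃ i, i < I ∧ x2 = 2*i + r) (hy2 : ∃ i, i < I ∧ y2 = 2*i + r)
    (hne1 : x1 ≠ y1) (hne2 : x2 ≠ y2) :
    Equiv.swap x1 y1 * Equiv.swap x2 y2 ∈ G := by
  obtain ⟨l1, h11, h12, h13⟩ := chain_swap_word r I x1 y1 hx1 hy1 hne1
  obtain ⟨l2, h21, h22, h23⟩ := chain_swap_word r I x2 y2 hx2 hy2 hne2
  have : Equiv.swap x1 y1 * Equiv.swap x2 y2 = ((l1 ++ l2).map (adj r)).prod := by
    rw [List.map_append, List.prod_append, h13, h23]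
  rw [this]
  exact adj_word_mem G r I hγ (l1 ++ l2).length (l1 ++ l2) le_rfl
    (by intro u hu; rcases List.mem_append.1 hu with h | h; exacts [h11 u h, h21 u h])
    (by rw [List.length_append]; exact h12.add_odd h22)

lemma supported_even_mem (G : Subgroup (Equiv.Perm ℕ)) (r I : ℕ)
    (hγ : ∀ i, i + 2 < I → adj r i * adj r (i+1) ∈ G) (τ : Equiv.Perm ℕ)
    (hsupp : ∀ x, τ x ≠ x → ∃ i, i < I ∧ x = 2*i + r) (he : IsEvenPerm τ) : τ ∈ G := by
  classical
  obtain ⟨l1, hl1s, hl1p, hl1e⟩ := he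
  set χ : ℕ → Prop := fun x => ∃ i, i < I ∧ x = 2*i + r with hχdef
  have hχ : ∀ x, χ x → x < 2*I + r + 1 := by
    rintro x ⟨i, hi, rfl⟩
    omega
  obtain ⟨l, hlχ, hlp⟩ := swap_decomp χ (2*I + r + 1) hχ
    ((Finset.range (2*I + r + 1)).filter (fun x => τ x ≠ x)).card τ hsupp le_rfl
  have hswap : ∀ t ∈ l.map (fun p => Equiv.swap p.1 p.2), t.IsSwap := by
    intro t ht
    obtain ⟨p, hp, rfl⟩ := List.mem_map.1 ht
    exact ⟨p.1, p.2, (hlχ p hp).2.2, rfl⟩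
  have hpar : Even (l.map (fun p => Equiv.swap p.1 p.2)).length :=
    (parity_transfer l1 _ hl1s hswap (by rw [hl1p, hlp])).1 hl1e
  rw [List.length_map] at hpar
  rw [hlp]
  clear hlp hl1p hl1s hl1e hsupp
  -- induction pairing two swaps at a time
  suffices H : ∀ (m : ℕ) (l : List (ℕ × ℕ)), l.length ≤ m →
      (∀ p ∈ l, χ p.1 ∧ χ p.2 ∧ p.1 ≠ p.2) → Even l.length →
      ((l.map (fun p => Equiv.swap p.1 p.2)).prod) ∈ G by
    exact H l.length l le_rfl hlχ hpar
  intro m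
  induction m with
  | zero =>
    intro l hl _ _
    have : l = [] := List.length_eq_zero_iff.1 (by omega)
    subst this
    simpa using one_mem G
  | succ m ih =>
    intro l hl hmem hev
    match l with
    | [] => simpa using one_mem G
    | [p] => simp at hev
    | p :: q :: rest =>
      have : (((p :: q :: rest)).map (fun p => Equiv.swap p.1 p.2)).prod
          = (Equiv.swap p.1 p.2 * Equiv.swap q.1 q.2)
            * ((rest.map (fun p => Equiv.swap p.1 p.2)).prod) := by
        simp [List.prod_cons, mul_assoc]
      rw [this]
      obtain ⟨hp1, hp2, hp3⟩ := hmem p (by simp)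
      obtain ⟨hq1, hq2, hq3⟩ := hmem q (by simp)
      refine mul_mem (chain_swap_pair_mem G r I hγ _ _ _ _ hp1 hp2 hq1 hq2 hp3 hq3)
        (ih rest (by simp at hl ⊢; omega) (fun u hu => hmem u (by simp [hu])) ?_)
      simpa [Nat.even_add_one, parity_simps] using hev

-- Part E : concrete elements of C n (n+3)
def Tcyc (a b c : ℕ) : Equiv.Perm ℕ := Equiv.swap a b * Equiv.swap b c

lemma Tcyc_apply (a b c : ℕ) (h1 : a ≠ b) (h2 : b ≠ c) (h3 : a ≠ c) (x : ℕ) :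
    Tcyc a b c x = if x = a then b else if x = b then c else if x = c then a else x := by
  simp only [Tcyc, Equiv.Perm.mul_apply, Equiv.swap_apply_def]
  split_ifs <;> omega

lemma conj_mem {G : Subgroup (Equiv.Perm ℕ)} {g v w : Equiv.Perm ℕ} (hg : g ∈ G) (hv : v ∈ G)
    (h : g * v = w * g) : w ∈ G := by
  have hw : w = g * v * g⁻¹ := by rw [h, mul_assoc, mul_inv_cancel, mul_one]
  rw [hw]
  exact mul_mem (mul_mem hg hv) (inv_mem hg)

lemma inv_helper {G : Subgroup (Equiv.Perm ℕ)} {w u : Equiv.Perm ℕ} (hw : w ∈ G)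
    (h : u * w = 1) : u ∈ G := by
  rw [eq_inv_of_mul_eq_one_left h]
  exact inv_mem hw

lemma Pmem (n j : ℕ) (h1 : 1 ≤ j) (h2 : j ≤ 4) : crossPerm n j ∈ C n (n+3) :=
  Subgroup.subset_closure ⟨j, h1, by omega, rfl⟩

section Concrete

variable (n : ℕ)

lemma cApp (hn9 : 9 ≤ n) (x : ℕ) :
    crossPerm n 2 (crossPerm n 1 x) =
      if 1 ≤ x ∧ x ≤ n-1 then x+2 else if x = n then 1 else if x = n+1 then 2 else x := by
  simp only [crossPerm_apply]; unfold crossFun; split_ifs <;> omega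

lemma c2App (hn9 : 9 ≤ n) (x : ℕ) :
    crossPerm n 3 (crossPerm n 2 x) =
      if 2 ≤ x ∧ x ≤ n then x+2 else if x = n+1 then 2 else if x = n+2 then 3 else x := by
  simp only [crossPerm_apply]; unfold crossFun; split_ifs <;> omega

lemma c3App (hn9 : 9 ≤ n) (x : ℕ) :
    crossPerm n 4 (crossPerm n 3 x) =
      if 3 ≤ x ∧ x ≤ n+1 then x+2 else if x = n+2 then 3 else if x = n+3 then 4 else x := by
  simp only [crossPerm_apply]; unfold crossFun; split_ifs <;> omega

lemma i2App (hn9 : 9 ≤ n) (x : ℕ) :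
    crossPerm n 2 (crossPerm n 3 x) =
      if 4 ≤ x ∧ x ≤ n+2 then x-2 else if x = 2 then n+1 else if x = 3 then n+2 else x := by
  simp only [crossPerm_apply]; unfold crossFun; split_ifs <;> omega

lemma i3App (hn9 : 9 ≤ n) (x : ℕ) :
    crossPerm n 3 (crossPerm n 4 x) =
      if 5 ≤ x ∧ x ≤ n+3 then x-2 else if x = 3 then n+2 else if x = 4 then n+3 else x := by
  simp only [crossPerm_apply]; unfold crossFun; split_ifs <;> omega

lemma E_v (hn : n % 2 = 1) (hn9 : 9 ≤ n) :
    (crossPerm n 2 * crossPerm n 3) * (crossPerm n 2 * crossPerm n 1) = Tcyc 1 (n+2) n := by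
  ext x
  simp only [Equiv.Perm.mul_apply, cApp n hn9, i2App n hn9,
    Tcyc_apply 1 (n+2) n (by omega) (by omega) (by omega)]
  split_ifs <;> omega

lemma E_v' (hn : n % 2 = 1) (hn9 : 9 ≤ n) :
    (crossPerm n 3 * crossPerm n 4) * (crossPerm n 3 * crossPerm n 2) = Tcyc 2 (n+3) (n+1) := by
  ext x
  simp only [Equiv.Perm.mul_apply, c2App n hn9, i3App n hn9,
    Tcyc_apply 2 (n+3) (n+1) (by omega) (by omega) (by omega)]
  split_ifs <;> omega

lemma E_B1 (hn : n % 2 = 1) (hn9 : 9 ≤ n) :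
    (crossPerm n 3 * crossPerm n 2) * Tcyc 1 (n+2) n
      = Tcyc 1 3 (n+2) * (crossPerm n 3 * crossPerm n 2) := by
  ext x
  simp only [Equiv.Perm.mul_apply,
    Tcyc_apply 1 (n+2) n (by omega) (by omega) (by omega),
    Tcyc_apply 1 3 (n+2) (by omega) (by omega) (by omega), c2App n hn9]
  split_ifs <;> omega

lemma E_B2 (hn : n % 2 = 1) (hn9 : 9 ≤ n) :
    (crossPerm n 3 * crossPerm n 2) * Tcyc 1 3 (n+2)
      = Tcyc 1 5 3 * (crossPerm n 3 * crossPerm n 2) := by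
  ext x
  simp only [Equiv.Perm.mul_apply,
    Tcyc_apply 1 3 (n+2) (by omega) (by omega) (by omega),
    Tcyc_apply 1 5 3 (by omega) (by omega) (by omega), c2App n hn9]
  split_ifs <;> omega

lemma E_B3 : Tcyc 1 3 5 * Tcyc 1 5 3 = 1 := by
  ext x
  simp only [Equiv.Perm.mul_apply, Equiv.Perm.one_apply,
    Tcyc_apply 1 3 5 (by omega) (by omega) (by omega),
    Tcyc_apply 1 5 3 (by omega) (by omega) (by omega)]
  split_ifs <;> omega

lemma E_B1' (hn : n % 2 = 1) (hn9 : 9 ≤ n) :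
    (crossPerm n 4 * crossPerm n 3) * Tcyc 2 (n+3) (n+1)
      = Tcyc 2 4 (n+3) * (crossPerm n 4 * crossPerm n 3) := by
  ext x
  simp only [Equiv.Perm.mul_apply,
    Tcyc_apply 2 (n+3) (n+1) (by omega) (by omega) (by omega),
    Tcyc_apply 2 4 (n+3) (by omega) (by omega) (by omega), c3App n hn9]
  split_ifs <;> omega

lemma E_B2' (hn : n % 2 = 1) (hn9 : 9 ≤ n) :
    (crossPerm n 4 * crossPerm n 3) * Tcyc 2 4 (n+3)
      = Tcyc 2 6 4 * (crossPerm n 4 * crossPerm n 3) := by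
  ext x
  simp only [Equiv.Perm.mul_apply,
    Tcyc_apply 2 4 (n+3) (by omega) (by omega) (by omega),
    Tcyc_apply 2 6 4 (by omega) (by omega) (by omega), c3App n hn9]
  split_ifs <;> omega

lemma E_B3' : Tcyc 2 4 6 * Tcyc 2 6 4 = 1 := by
  ext x
  simp only [Equiv.Perm.mul_apply, Equiv.Perm.one_apply,
    Tcyc_apply 2 4 6 (by omega) (by omega) (by omega),
    Tcyc_apply 2 6 4 (by omega) (by omega) (by omega)]
  split_ifs <;> omega

lemma E_Sc1 (hn : n % 2 = 1) (hn9 : 9 ≤ n) (a : ℕ) (ha1 : 1 ≤ a) (ha2 : a + 6 ≤ n + 1) :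
    (crossPerm n 2 * crossPerm n 1) * Tcyc a (a+2) (a+4)
      = Tcyc (a+2) (a+4) (a+6) * (crossPerm n 2 * crossPerm n 1) := by
  ext x
  simp only [Equiv.Perm.mul_apply,
    Tcyc_apply a (a+2) (a+4) (by omega) (by omega) (by omega),
    Tcyc_apply (a+2) (a+4) (a+6) (by omega) (by omega) (by omega), cApp n hn9]
  split_ifs <;> omega

lemma E_Sc2 (hn : n % 2 = 1) (hn9 : 9 ≤ n) (a : ℕ) (ha1 : 2 ≤ a) (ha2 : a + 4 ≤ n) :
    (crossPerm n 3 * crossPerm n 2) * Tcyc a (a+2) (a+4)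
      = Tcyc (a+2) (a+4) (a+6) * (crossPerm n 3 * crossPerm n 2) := by
  ext x
  simp only [Equiv.Perm.mul_apply,
    Tcyc_apply a (a+2) (a+4) (by omega) (by omega) (by omega),
    Tcyc_apply (a+2) (a+4) (a+6) (by omega) (by omega) (by omega), c2App n hn9]
  split_ifs <;> omega

lemma E_Sc3 (hn : n % 2 = 1) (hn9 : 9 ≤ n) (a : ℕ) (ha1 : 3 ≤ a) (ha2 : a + 4 ≤ n + 1) :
    (crossPerm n 4 * crossPerm n 3) * Tcyc a (a+2) (a+4)
      = Tcyc (a+2) (a+4) (a+6) * (crossPerm n 4 * crossPerm n 3) := by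
  ext x
  simp only [Equiv.Perm.mul_apply,
    Tcyc_apply a (a+2) (a+4) (by omega) (by omega) (by omega),
    Tcyc_apply (a+2) (a+4) (a+6) (by omega) (by omega) (by omega), c3App n hn9]
  split_ifs <;> omega

lemma c_mem (hn9 : 9 ≤ n) : crossPerm n 2 * crossPerm n 1 ∈ C n (n+3) :=
  mul_mem (Pmem n 2 (by omega) (by omega)) (Pmem n 1 (by omega) (by omega))

lemma c2_mem (hn9 : 9 ≤ n) : crossPerm n 3 * crossPerm n 2 ∈ C n (n+3) :=
  mul_mem (Pmem n 3 (by omega) (by omega)) (Pmem n 2 (by omega) (by omega))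

lemma c3_mem (hn9 : 9 ≤ n) : crossPerm n 4 * crossPerm n 3 ∈ C n (n+3) :=
  mul_mem (Pmem n 4 (by omega) (by omega)) (Pmem n 3 (by omega) (by omega))

lemma v_mem (hn9 : 9 ≤ n) (hn : n % 2 = 1) : Tcyc 1 (n+2) n ∈ C n (n+3) := by
  rw [← E_v n hn hn9]
  exact mul_mem (mul_mem (Pmem n 2 (by omega) (by omega)) (Pmem n 3 (by omega) (by omega)))
    (mul_mem (Pmem n 2 (by omega) (by omega)) (Pmem n 1 (by omega) (by omega)))

lemma v'_mem (hn9 : 9 ≤ n) (hn : n % 2 = 1) : Tcyc 2 (n+3) (n+1) ∈ C n (n+3) := by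
  rw [← E_v' n hn hn9]
  exact mul_mem (mul_mem (Pmem n 3 (by omega) (by omega)) (Pmem n 4 (by omega) (by omega)))
    (mul_mem (Pmem n 3 (by omega) (by omega)) (Pmem n 2 (by omega) (by omega)))

lemma T135_mem (hn9 : 9 ≤ n) (hn : n % 2 = 1) : Tcyc 1 3 5 ∈ C n (n+3) := by
  have h1 : Tcyc 1 3 (n+2) ∈ C n (n+3) :=
    conj_mem (c2_mem n hn9) (v_mem n hn9 hn) (E_B1 n hn hn9)
  have h2 : Tcyc 1 5 3 ∈ C n (n+3) :=
    conj_mem (c2_mem n hn9) h1 (E_B2 n hn hn9)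
  exact inv_helper h2 E_B3

lemma T246_mem (hn9 : 9 ≤ n) (hn : n % 2 = 1) : Tcyc 2 4 6 ∈ C n (n+3) := by
  have h1 : Tcyc 2 4 (n+3) ∈ C n (n+3) :=
    conj_mem (c3_mem n hn9) (v'_mem n hn9 hn) (E_B1' n hn hn9)
  have h2 : Tcyc 2 6 4 ∈ C n (n+3) :=
    conj_mem (c3_mem n hn9) h1 (E_B2' n hn hn9)
  exact inv_helper h2 E_B3'

lemma gammaOdd (hn9 : 9 ≤ n) (hn : n % 2 = 1) :
    ∀ a, a % 2 = 1 → a + 4 ≤ n + 2 → Tcyc a (a+2) (a+4) ∈ C n (n+3) := by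
  intro a
  induction a using Nat.strong_induction_on with
  | _ a ih =>
    intro hpar hbound
    rcases Nat.lt_or_ge a 5 with h5 | h5
    · have : a = 1 ∨ a = 3 := by omega
      rcases this with rfl | rfl
      · exact T135_mem n hn9 hn
      · exact conj_mem (c_mem n hn9) (T135_mem n hn9 hn)
          (E_Sc1 n hn hn9 1 (by omega) (by omega))
    · obtain ⟨b, rfl⟩ : ∃ b, a = b + 2 := ⟨a - 2, by omega⟩
      exact conj_mem (c2_mem n hn9) (ih b (by omega) (by omega) (by omega))
        (E_Sc2 n hn hn9 b (by omega) (by omega))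

lemma gammaEven (hn9 : 9 ≤ n) (hn : n % 2 = 1) :
    ∀ a, a % 2 = 0 → 2 ≤ a → a + 4 ≤ n + 3 → Tcyc a (a+2) (a+4) ∈ C n (n+3) := by
  intro a
  induction a using Nat.strong_induction_on with
  | _ a ih =>
    intro hpar h2 hbound
    rcases Nat.lt_or_ge a 6 with h6 | h6
    · have : a = 2 ∨ a = 4 := by omega
      rcases this with rfl | rfl
      · exact T246_mem n hn9 hn
      · exact conj_mem (c2_mem n hn9) (T246_mem n hn9 hn)
          (E_Sc2 n hn hn9 2 (by omega) (by omega))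
    · obtain ⟨b, rfl⟩ : ∃ b, a = b + 2 := ⟨a - 2, by omega⟩
      exact conj_mem (c3_mem n hn9) (ih b (by omega) (by omega) (by omega) (by omega))
        (E_Sc3 n hn hn9 b (by omega) (by omega))

end Concrete


theorem stmt19 (n : ℕ) (hn : n % 8 = 1) (hn9 : 9 ≤ n) (hn201 : n ≤ 201) :
    ∀ σ : Equiv.Perm ℕ, σ ∈ C n (n + 3) ↔
      ∃ σodd σeven : Equiv.Perm ℕ,
        (∀ i, σodd i ≠ i → i % 2 = 1 ∧ 1 ≤ i ∧ i ≤ n + 3) ∧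
        (∀ i, σeven i ≠ i → i % 2 = 0 ∧ 1 ≤ i ∧ i ≤ n + 3) ∧
        IsEvenPerm σodd ∧ IsEvenPerm σeven ∧ σ = σodd * σeven := by
  have hn2 : n % 2 = 1 := by omega
  intro σ
  constructor
  · intro hσ
    have hle : C n (n+3) ≤ D n := by
      apply (Subgroup.closure_le (D n)).2
      rintro τ ⟨j, hj1, hj2, rfl⟩
      have hj4 : j ≤ 4 := by omega
      obtain ⟨h1, h2, h3, h4, h5, h6, h7⟩ :=
        crossPerm_decomp n j (2*j+n-1) (j+(j+1)%2) (j+j%2)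
          (((2*j+n-1)/2 - (j+(j+1)%2) + 1)/2) (((2*j+n-1)/2 - (j+j%2) + 1)/2)
          hn hn9 hj1 hj4 rfl rfl rfl rfl rfl
      exact ⟨_, _, h1, h2, ⟨_, h3, rfl, h5⟩, ⟨_, h4, rfl, h6⟩, h7⟩
    exact hle hσ
  · rintro ⟨σo, σe, ho, he, eo, ee, rfl⟩
    refine mul_mem ?_ ?_
    · refine supported_even_mem (C n (n+3)) 1 ((n+3)/2) ?_ σo ?_ eo
      · intro i hi
        have h := gammaOdd n hn9 hn2 (2*i+1) (by omega) (by omega)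
        have e : adj 1 i * adj 1 (i+1) = Tcyc (2*i+1) (2*i+1+2) (2*i+1+4) := by
          unfold adj Tcyc
          rw [show 2*i+2+1 = 2*i+1+2 from by ring, show 2*(i+1)+1 = 2*i+1+2 from by ring,
            show 2*(i+1)+2+1 = 2*i+1+4 from by ring]
        rw [e]
        exact h
      · intro x hx
        obtain ⟨h1, h2, h3⟩ := ho x hx
        exact ⟨(x-1)/2, by omega, by omega⟩
    · refine supported_even_mem (C n (n+3)) 2 ((n+3)/2) ?_ σe ?_ ee
      · intro i hi
        have h := gammaEven n hn9 hn2 (2*i+2) (by omega) (by omega) (by omega)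
        have e : adj 2 i * adj 2 (i+1) = Tcyc (2*i+2) (2*i+2+2) (2*i+2+4) := by
          unfold adj Tcyc
          rw [show 2*(i+1)+2+2 = 2*i+2+4 from by ring, show 2*(i+1)+2 = 2*i+2+2 from by ring]
        rw [e]
        exact h
      · intro x hx
        obtain ⟨h1, h2, h3⟩ := he x hx
        exact ⟨(x-2)/2, by omega, by omega⟩
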